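/- arXiv:2307.07182 — 3 statements merged into one kernel-verified Lean document; each statement's English description precedes it below -/
import Mathlib

section
/- Let R be a polynomial in the shift operator, R = T^k + a₁T^(k−1) + ⋯ + a_k·I with complex coefficients and a_k ≠ 0, and factor its characteristic polynomial as ∏_{i=1}^{l}(X − μ_i)^{s_i} with distinct nonzero roots μ_i. Let μ ∈ ℂ be nonzero with μ ≠ μ_i for all i, and let L = span{μ^n, n μ^n, …, n^s μ^n}. Then R restricted to L is an invertible linear map (automorphism of L). -/
open Polynomial

/-- The shift operator `(T y) n = y (n+1)` on complex-valued sequences. -/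
def shift : Module.End ℂ (ℕ → ℂ) where
  toFun y := fun n => y (n + 1)
  map_add' _ _ := rfl
  map_smul' _ _ := rfl

/-- The basis sequences `n ↦ n^k μ^n`. -/
def basisSeq (mu : ℂ) (k : ℕ) : ℕ → ℂ := fun n => (n : ℂ) ^ k * mu ^ n

lemma D_basisSeq (mu : ℂ) (k : ℕ) :
    (shift - mu • (1 : Module.End ℂ (ℕ → ℂ))) (basisSeq mu k)
      = ∑ j ∈ Finset.range k, ((k.choose j : ℂ) * mu) • basisSeq mu j := by
  funext n
  have h1 : ((n : ℂ) + 1) ^ k = ∑ j ∈ Finset.range (k + 1), (n : ℂ) ^ j * (k.choose j : ℂ) := by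
    rw [add_pow]; simp
  have h2 : shift (basisSeq mu k) n = ((n : ℂ) + 1) ^ k * (mu ^ n * mu) := by
    simp only [shift, basisSeq, LinearMap.coe_mk, AddHom.coe_mk, pow_succ]
    push_cast; ring
  have h3 : (shift - mu • (1 : Module.End ℂ (ℕ → ℂ))) (basisSeq mu k) n
      = shift (basisSeq mu k) n - mu * basisSeq mu k n := rfl
  rw [h3, h2, h1, Finset.sum_range_succ, Finset.sum_apply]
  simp only [basisSeq, Pi.smul_apply, smul_eq_mul]
  rw [add_mul, Finset.sum_mul, Nat.choose_self,
    Finset.sum_congr rfl (fun j _ => by ring :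
    ∀ j ∈ Finset.range k, (n : ℂ) ^ j * (k.choose j : ℂ) * (mu ^ n * mu)
      = (k.choose j : ℂ) * mu * ((n : ℂ) ^ j * mu ^ n))]
  push_cast
  ring

lemma D_pow_basisSeq (mu : ℂ) : ∀ k,
    ((shift - mu • (1 : Module.End ℂ (ℕ → ℂ))) ^ (k + 1)) (basisSeq mu k) = 0 := by
  intro k
  induction k using Nat.strong_induction_on with
  | _ k ih =>
    have hstep : ((shift - mu • (1 : Module.End ℂ (ℕ → ℂ))) ^ (k + 1)) (basisSeq mu k)
        = ((shift - mu • 1) ^ k) ((shift - mu • 1) (basisSeq mu k)) := by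
      rw [pow_succ, Module.End.mul_apply]
    rw [hstep, D_basisSeq, map_sum]
    apply Finset.sum_eq_zero
    intro j hj
    rw [Finset.mem_range] at hj
    rw [map_smul]
    have hk : k = (k - (j + 1)) + (j + 1) := by omega
    have hz : ((shift - mu • (1 : Module.End ℂ (ℕ → ℂ))) ^ k) (basisSeq mu j) = 0 := by
      conv_lhs => rw [hk, pow_add, Module.End.mul_apply, ih j hj, map_zero]
    rw [hz, smul_zero]

lemma D_pow_basisSeq' (mu : ℂ) (s k : ℕ) (hk : k ≤ s) :
    ((shift - mu • (1 : Module.End ℂ (ℕ → ℂ))) ^ (s + 1)) (basisSeq mu k) = 0 := by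
  have h : s + 1 = (s - k) + (k + 1) := by omega
  rw [h, pow_add, Module.End.mul_apply, D_pow_basisSeq, map_zero]

theorem stmt_9 (p : Polynomial ℂ) (hmonic : p.Monic) (hdeg : 1 ≤ p.natDegree)
    (h0 : p.eval 0 ≠ 0) (mu : ℂ) (hmu : mu ≠ 0) (hroot : p.eval mu ≠ 0) (s : ℕ)
    (L : Submodule ℂ (ℕ → ℂ))
    (hL : L = Submodule.span ℂ (Set.range fun k : Fin (s + 1) => basisSeq mu k)) :
    ∃ h : ∀ y ∈ L, (Polynomial.aeval shift p) y ∈ L,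
      Function.Bijective (((Polynomial.aeval shift p) :
        (ℕ → ℂ) →ₗ[ℂ] (ℕ → ℂ)).restrict h) := by
  -- shift preserves L
  have hshift : ∀ y ∈ L, shift y ∈ L := by
    subst hL
    intro y hy
    induction hy using Submodule.span_induction with
    | mem x hx =>
      obtain ⟨k, rfl⟩ := hx
      have : shift (basisSeq mu k) = (shift - mu • 1) (basisSeq mu k) + mu • basisSeq mu k := by
        simp [LinearMap.sub_apply]
      rw [this, D_basisSeq]
      apply Submodule.add_mem
      · apply Submodule.sum_mem
        intro j hj
        rw [Finset.mem_range] at hj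
        apply Submodule.smul_mem
        exact Submodule.subset_span ⟨⟨j, by omega⟩, rfl⟩
      · exact Submodule.smul_mem _ _ (Submodule.subset_span ⟨k, rfl⟩)
    | zero => simpa using Submodule.zero_mem _
    | add x y hx hy ihx ihy => rw [map_add]; exact Submodule.add_mem _ ihx ihy
    | smul a x hx ihx => rw [map_smul]; exact Submodule.smul_mem _ _ ihx
  -- any polynomial in shift preserves L
  have haev : ∀ q : ℂ[X], ∀ y ∈ L, (Polynomial.aeval shift q) y ∈ L := by
    intro q
    induction q using Polynomial.induction_on' with
    | add f g hf hg =>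
      intro y hy
      rw [map_add, LinearMap.add_apply]
      exact Submodule.add_mem _ (hf y hy) (hg y hy)
    | monomial n a =>
      intro y hy
      rw [Polynomial.aeval_monomial]
      have hpow : ∀ m : ℕ, ∀ z ∈ L, (shift ^ m) z ∈ L := by
        intro m
        induction m with
        | zero => intro z hz; simpa using hz
        | succ m ihm =>
          intro z hz
          rw [pow_succ, Module.End.mul_apply]
          exact ihm _ (hshift z hz)
      have : (algebraMap ℂ (Module.End ℂ (ℕ → ℂ)) a * shift ^ n) y
          = a • (shift ^ n) y := by
        rw [Module.End.mul_apply]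
        simp [Module.algebraMap_end_apply]
      rw [this]
      exact Submodule.smul_mem _ _ (hpow n y hy)
  refine ⟨fun y hy => haev p y hy, ?_⟩
  -- finite dimensionality of L
  haveI : FiniteDimensional ℂ L := by
    rw [hL]
    exact FiniteDimensional.span_of_finite ℂ (Set.finite_range _)
  -- (shift - mu)^(s+1) kills L
  have hkill : ∀ y ∈ L, ((shift - mu • (1 : Module.End ℂ (ℕ → ℂ))) ^ (s + 1)) y = 0 := by
    subst hL
    intro y hy
    induction hy using Submodule.span_induction with
    | mem x hx =>
      obtain ⟨k, rfl⟩ := hx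
      exact D_pow_basisSeq' mu s k (by omega)
    | zero => simp
    | add x y hx hy ihx ihy => rw [map_add, ihx, ihy, add_zero]
    | smul a x hx ihx => rw [map_smul, ihx, smul_zero]
  -- coprimality
  have hcop : IsCoprime ((X - C mu) ^ (s + 1)) p := by
    apply IsCoprime.pow_left
    rw [(Polynomial.irreducible_X_sub_C mu).coprime_iff_not_dvd,
      Polynomial.dvd_iff_isRoot]
    exact hroot
  obtain ⟨a, b, hab⟩ := hcop
  -- injectivity
  have hDpoly : Polynomial.aeval shift ((X - C mu) ^ (s + 1))
      = (shift - mu • (1 : Module.End ℂ (ℕ → ℂ))) ^ (s + 1) := by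
    rw [map_pow, map_sub, Polynomial.aeval_X, Polynomial.aeval_C]
    congr 1
  have hinj : ∀ y ∈ L, (Polynomial.aeval shift p) y = 0 → y = 0 := by
    intro y hy hzero
    have := congrArg (fun q => (Polynomial.aeval shift q) y) hab
    simp only [map_add, map_mul, LinearMap.add_apply, Module.End.mul_apply,
      map_one, Module.End.one_apply] at this
    rw [hDpoly] at this
    rw [hkill y hy, hzero, map_zero, map_zero, add_zero] at this
    exact this.symm
  -- restricted map
  set f := ((Polynomial.aeval shift p : (ℕ → ℂ) →ₗ[ℂ] (ℕ → ℂ)).restrict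
    (fun y hy => haev p y hy)) with hf
  have finj : Function.Injective f := by
    rw [← LinearMap.ker_eq_bot, LinearMap.ker_eq_bot']
    intro m hm
    exact Subtype.ext (hinj m.1 m.2 (congrArg Subtype.val hm))
  exact ⟨finj, (LinearMap.injective_iff_surjective).mp finj⟩
end

section
/- Let p(X) = (X − μ)^m · q(X) be a monic complex polynomial with q(μ) ≠ 0, μ ≠ 0, p(0) ≠ 0. Then for every f in span{μ^n, n μ^n, …, n^s μ^n}, the difference equation p(T)y = f has a solution y in span{n^m μ^n, n^{m+1} μ^n, …, n^{m+s} μ^n}, and this solution is unique within that span. -/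
open Polynomial Finset

lemma shift_pow (i : ℕ) (y : ℕ → ℂ) (n : ℕ) : (shift ^ i) y n = y (n + i) := by
  induction i generalizing y n with
  | zero => rfl
  | succ i ih =>
    rw [pow_succ, Module.End.mul_apply, ih]
    rfl

noncomputable def theta (r : ℂ[X]) : ℂ[X] := X * derivative r

lemma theta_coeff (r : ℂ[X]) (i : ℕ) : (theta r).coeff i = i * r.coeff i := by
  cases i with
  | zero => simp [theta, mul_coeff_zero]
  | succ i => rw [theta, coeff_X_mul, coeff_derivative]; push_cast; ring

lemma theta_iter_coeff (j : ℕ) (r : ℂ[X]) (i : ℕ) :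
    (theta^[j] r).coeff i = (i : ℂ) ^ j * r.coeff i := by
  induction j generalizing r with
  | zero => simp
  | succ j ih =>
    rw [Function.iterate_succ_apply, ih, theta_coeff, pow_succ]
    ring

lemma theta_iter_natDegree (j : ℕ) (r : ℂ[X]) : (theta^[j] r).natDegree ≤ r.natDegree := by
  rw [natDegree_le_iff_coeff_eq_zero]
  intro i hi
  rw [theta_iter_coeff, coeff_eq_zero_of_natDegree_lt hi, mul_zero]

lemma theta_iter_eval (j : ℕ) (r : ℂ[X]) (x : ℂ) :
    (theta^[j] r).eval x = ∑ i ∈ range (r.natDegree + 1), (i : ℂ) ^ j * r.coeff i * x ^ i := by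
  rw [eval_eq_sum_range' (Nat.lt_succ_of_le (theta_iter_natDegree j r))]
  exact Finset.sum_congr rfl fun i _ => by rw [theta_iter_coeff]

lemma aeval_shift_apply (p : ℂ[X]) (y : ℕ → ℂ) (n : ℕ) :
    (Polynomial.aeval shift p) y n = ∑ i ∈ range (p.natDegree + 1), p.coeff i * y (n + i) := by
  rw [Polynomial.aeval_eq_sum_range]
  have : (∑ i ∈ range (p.natDegree + 1), p.coeff i • shift ^ i) y
      = ∑ i ∈ range (p.natDegree + 1), p.coeff i • ((shift ^ i) y) := by
    rw [LinearMap.sum_apply]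
    exact Finset.sum_congr rfl fun i _ => rfl
  rw [this]
  rw [Finset.sum_apply]
  exact Finset.sum_congr rfl fun i _ => by rw [Pi.smul_apply, smul_eq_mul, shift_pow]

lemma theta_iter_factor (mu : ℂ) (m : ℕ) (q : ℂ[X]) :
    ∀ j ≤ m, ∃ h : ℂ[X], theta^[j] ((X - C mu) ^ m * q) = (X - C mu) ^ (m - j) * h ∧
      h.eval mu = mu ^ j * (m.descFactorial j : ℂ) * q.eval mu := by
  intro j hj
  induction j with
  | zero => exact ⟨q, by simp⟩
  | succ j ih =>
    obtain ⟨h, hfac, hval⟩ := ih (Nat.le_of_succ_le hj)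
    have hmj : m - j = (m - (j+1)) + 1 := by omega
    refine ⟨X * (C ((m - j : ℕ) : ℂ) * h + (X - C mu) * derivative h), ?_, ?_⟩
    · rw [Function.iterate_succ_apply', hfac, theta]
      rw [derivative_mul, derivative_pow, derivative_sub, derivative_X, derivative_C, sub_zero,
        mul_one]
      rw [hmj]
      push_cast [hmj]
      ring
    · rw [Nat.descFactorial_succ]
      simp only [eval_mul, eval_add, eval_X, eval_C, eval_sub, sub_self, zero_mul, add_zero]
      rw [hval]
      push_cast
      ring

lemma A_vanish (mu : ℂ) (m : ℕ) (q : ℂ[X]) {j : ℕ} (hj : j < m) :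
    (theta^[j] ((X - C mu) ^ m * q)).eval mu = 0 := by
  obtain ⟨h, hfac, -⟩ := theta_iter_factor mu m q j hj.le
  rw [hfac, eval_mul, eval_pow, eval_sub, eval_X, eval_C, sub_self,
    zero_pow (by omega), zero_mul]

lemma A_top (mu : ℂ) (m : ℕ) (q : ℂ[X]) :
    (theta^[m] ((X - C mu) ^ m * q)).eval mu = mu ^ m * (m.factorial : ℂ) * q.eval mu := by
  obtain ⟨h, hfac, hval⟩ := theta_iter_factor mu m q m le_rfl
  rw [hfac, Nat.sub_self, pow_zero, one_mul, hval, Nat.descFactorial_self]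

/-- KEY: action of `p(T)` on `basisSeq mu d`, binomial expansion. -/
lemma key1 (p : ℂ[X]) (mu : ℂ) (d : ℕ) :
    (Polynomial.aeval shift p) (basisSeq mu d) =
      ∑ j ∈ range (d + 1),
        ((d.choose j : ℂ) * (theta^[j] p).eval mu) • basisSeq mu (d - j) := by
  funext n
  rw [aeval_shift_apply]
  rw [Finset.sum_apply]
  have step : ∀ i, p.coeff i * basisSeq mu d (n + i) =
      ∑ j ∈ range (d + 1),
        (d.choose j : ℂ) * ((i:ℂ)^j * p.coeff i * mu^i) * ((n:ℂ)^(d-j) * mu^n) := by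
    intro i
    simp only [basisSeq]
    push_cast
    rw [show ((n:ℂ) + i) = (i:ℂ) + n by ring, add_pow ((i:ℂ)) ((n:ℂ)) d, pow_add,
      Finset.sum_mul, Finset.mul_sum]
    exact Finset.sum_congr rfl fun j hj => by ring
  calc ∑ i ∈ range (p.natDegree + 1), p.coeff i * basisSeq mu d (n + i)
      = ∑ i ∈ range (p.natDegree + 1), ∑ j ∈ range (d + 1),
          (d.choose j : ℂ) * ((i:ℂ)^j * p.coeff i * mu^i) * ((n:ℂ)^(d-j) * mu^n) :=
        Finset.sum_congr rfl fun i _ => step i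
    _ = ∑ j ∈ range (d + 1), ∑ i ∈ range (p.natDegree + 1),
          (d.choose j : ℂ) * ((i:ℂ)^j * p.coeff i * mu^i) * ((n:ℂ)^(d-j) * mu^n) :=
        Finset.sum_comm
    _ = ∑ j ∈ range (d + 1),
          (((d.choose j : ℂ) * (theta^[j] p).eval mu) • basisSeq mu (d - j)) n := by
        refine Finset.sum_congr rfl fun j _ => ?_
        rw [theta_iter_eval, Pi.smul_apply, smul_eq_mul, basisSeq]
        rw [Finset.mul_sum, Finset.sum_mul]

lemma key2 (mu : ℂ) (m : ℕ) (q : ℂ[X]) (k : ℕ) :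
    (Polynomial.aeval shift ((X - C mu) ^ m * q)) (basisSeq mu (m + k)) =
      ∑ t ∈ range (k + 1),
        (((m + k).choose (m + t) : ℂ) * (theta^[m + t] ((X - C mu) ^ m * q)).eval mu) •
          basisSeq mu (k - t) := by
  rw [key1]
  rw [show m + k + 1 = m + (k + 1) by omega]
  rw [Finset.range_eq_Ico, ← Finset.sum_Ico_consecutive _ (Nat.zero_le m) (Nat.le_add_right m (k+1)),
    ← Finset.range_eq_Ico, Finset.sum_Ico_eq_sum_range]
  have h1 : ∑ j ∈ range m,
      (((m + k).choose j : ℂ) * (theta^[j] ((X - C mu) ^ m * q)).eval mu) •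
        basisSeq mu (m + k - j) = 0 := by
    refine Finset.sum_eq_zero fun j hj => ?_
    rw [A_vanish mu m q (Finset.mem_range.mp hj), mul_zero, zero_smul]
  rw [h1, zero_add, show m + (k + 1) - m = k + 1 by omega]
  exact Finset.sum_congr rfl fun t _ => by rw [show m + k - (m + t) = k - t by omega]

lemma indep_aux (mu : ℂ) (hmu : mu ≠ 0) {N : ℕ} (c : Fin N → ℂ)
    (h : ∑ j : Fin N, c j • basisSeq mu (j : ℕ) = 0) : c = 0 := by
  set P : ℂ[X] := ∑ j : Fin N, C (c j) * X ^ (j : ℕ) with hP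
  have hev : ∀ n : ℕ, P.eval (n : ℂ) = 0 := by
    intro n
    have hn := congrFun h n
    simp only [Finset.sum_apply, Pi.smul_apply, smul_eq_mul, Pi.zero_apply, basisSeq] at hn
    have : P.eval (n : ℂ) * mu ^ n = 0 := by
      rw [hP]
      simp only [eval_finset_sum, eval_mul, eval_C, eval_pow, eval_X, Finset.sum_mul]
      rw [← hn]
      exact Finset.sum_congr rfl fun j _ => by ring
    exact (mul_eq_zero.mp this).resolve_right (pow_ne_zero n hmu)
  have hP0 : P = 0 := by
    apply Polynomial.eq_zero_of_infinite_isRoot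
    exact Set.infinite_of_injective_forall_mem (Nat.cast_injective (R := ℂ)) hev
  funext j
  have : P.coeff (j : ℕ) = c j := by
    rw [hP, Polynomial.finset_sum_coeff]
    rw [Finset.sum_eq_single j]
    · simp
    · intro b _ hb
      rw [coeff_C_mul, coeff_X_pow, if_neg (fun hjb => hb (Fin.ext (by omega))), mul_zero]
    · simp
  rw [hP0, coeff_zero] at this
  simpa using this.symm

theorem stmt_11 (mu : ℂ) (hmu : mu ≠ 0) (m : ℕ) (q : Polynomial ℂ)
    (p : Polynomial ℂ) (hp : p = (X - C mu) ^ m * q)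
    (hmonic : p.Monic) (hq : q.eval mu ≠ 0) (h0 : p.eval 0 ≠ 0) (s : ℕ)
    (f : ℕ → ℂ)
    (hf : f ∈ Submodule.span ℂ (Set.range fun k : Fin (s + 1) => basisSeq mu k)) :
    ∃! y : ℕ → ℂ,
      y ∈ Submodule.span ℂ (Set.range fun k : Fin (s + 1) => basisSeq mu (m + k)) ∧
      (Polynomial.aeval shift p) y = f := by
  set A : ℕ → ℂ := fun j => (theta^[j] p).eval mu with hA
  set M : Matrix (Fin (s+1)) (Fin (s+1)) ℂ := fun j k =>
    if (j : ℕ) ≤ (k : ℕ) then (((m + (k:ℕ)).choose (m + ((k:ℕ) - j)) : ℕ) : ℂ) * A (m + ((k:ℕ) - j))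
    else 0 with hM
  -- P1 : action on generators
  have P1 : ∀ k : Fin (s+1), (Polynomial.aeval shift p) (basisSeq mu (m + (k:ℕ))) =
      ∑ j : Fin (s+1), M j k • basisSeq mu (j : ℕ) := by
    intro k
    rw [hp, key2]
    set fn : ℕ → (ℕ → ℂ) := fun j =>
      (if j ≤ (k:ℕ) then (((m + (k:ℕ)).choose (m + ((k:ℕ) - j)) : ℕ) : ℂ) *
        (theta^[m + ((k:ℕ) - j)] ((X - C mu) ^ m * q)).eval mu else 0) • basisSeq mu j with hfn
    have e1 : ∑ j : Fin (s+1), M j k • basisSeq mu (j : ℕ) = ∑ j ∈ range (s+1), fn j := by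
      rw [← Fin.sum_univ_eq_sum_range]
      exact Finset.sum_congr rfl fun j _ => by simp only [hfn, hM, hA, hp]
    have e2 : ∑ j ∈ range (s+1), fn j = ∑ j ∈ range ((k:ℕ)+1), fn j := by
      refine (Finset.sum_subset ?_ ?_).symm
      · exact Finset.range_subset_range.mpr (by omega)
      · intro j _ hj
        simp only [Finset.mem_range, not_lt] at hj
        simp only [hfn]
        rw [if_neg (by omega), zero_smul]
    have e3 : ∑ j ∈ range ((k:ℕ)+1), fn j =
        ∑ t ∈ range ((k:ℕ)+1),
          ((((m + (k:ℕ)).choose (m + t) : ℕ) : ℂ) *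
            (theta^[m + t] ((X - C mu) ^ m * q)).eval mu) • basisSeq mu ((k:ℕ) - t) := by
      rw [← Finset.sum_range_reflect]
      refine Finset.sum_congr rfl fun t ht => ?_
      have ht' : t ≤ (k:ℕ) := Nat.lt_succ_iff.mp (Finset.mem_range.mp ht)
      simp only [hfn]
      rw [show (k:ℕ) + 1 - 1 - t = (k:ℕ) - t by omega, if_pos (by omega),
        show (k:ℕ) - ((k:ℕ) - t) = t by omega]
    rw [e1, e2, e3]
  -- M is invertible
  have hdiag : ∀ k : Fin (s+1), M k k = (((m + (k:ℕ)).choose m : ℕ) : ℂ) * A m := by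
    intro k
    rw [hM]
    simp only [le_refl, if_pos, Nat.sub_self, Nat.add_zero]
  have hAm : A m ≠ 0 := by
    simp only [hA, hp]
    rw [A_top]
    exact mul_ne_zero (mul_ne_zero (pow_ne_zero m hmu)
      (Nat.cast_ne_zero.mpr (Nat.factorial_ne_zero m))) hq
  have hBT : M.BlockTriangular id := by
    intro i j hij
    rw [hM]
    exact if_neg (by simpa using Nat.not_le.mpr hij)
  have hdet : IsUnit M.det := by
    rw [Matrix.det_of_upperTriangular hBT]
    rw [isUnit_iff_ne_zero]
    refine Finset.prod_ne_zero_iff.mpr fun k _ => ?_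
    rw [hdiag]
    exact mul_ne_zero (Nat.cast_ne_zero.mpr
      (Nat.choose_pos (by omega : m ≤ m + (k:ℕ))).ne') hAm
  -- the general action formula
  have G : ∀ c : Fin (s+1) → ℂ,
      (Polynomial.aeval shift p) (∑ k : Fin (s+1), c k • basisSeq mu (m + (k:ℕ))) =
        ∑ j : Fin (s+1), (M.mulVec c) j • basisSeq mu (j : ℕ) := by
    intro c
    rw [map_sum]
    have : ∀ k : Fin (s+1), (Polynomial.aeval shift p) (c k • basisSeq mu (m + (k:ℕ)))
        = ∑ j : Fin (s+1), (M j k * c k) • basisSeq mu (j : ℕ) := by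
      intro k
      rw [map_smul, P1 k, Finset.smul_sum]
      exact Finset.sum_congr rfl fun j _ => by rw [smul_smul, mul_comm]
    rw [Finset.sum_congr rfl fun k _ => this k, Finset.sum_comm]
    refine Finset.sum_congr rfl fun j _ => ?_
    rw [Matrix.mulVec, dotProduct, Finset.sum_smul]
  -- decompose f
  rw [Submodule.mem_span_range_iff_exists_fun ℂ] at hf
  obtain ⟨b, hb⟩ := hf
  set a : Fin (s+1) → ℂ := M⁻¹.mulVec b with ha
  have hMa : M.mulVec a = b := by
    rw [ha, Matrix.mulVec_mulVec, Matrix.mul_nonsing_inv M hdet, Matrix.one_mulVec]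
  set y : ℕ → ℂ := ∑ k : Fin (s+1), a k • basisSeq mu (m + (k:ℕ)) with hy
  refine ⟨y, ⟨?_, ?_⟩, ?_⟩
  · rw [Submodule.mem_span_range_iff_exists_fun ℂ]
    exact ⟨a, rfl⟩
  · rw [hy, G, hMa, hb]
  · rintro y' ⟨h1, h2⟩
    rw [Submodule.mem_span_range_iff_exists_fun ℂ] at h1
    obtain ⟨a', ha'⟩ := h1
    have hGa' : ∑ j : Fin (s+1), (M.mulVec a') j • basisSeq mu (j : ℕ) = f := by
      rw [← G, ha', h2]
    have hz : ∑ j : Fin (s+1), ((M.mulVec a' - b) j) • basisSeq mu (j : ℕ) = 0 := by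
      have : ∑ j : Fin (s+1), ((M.mulVec a' - b) j) • basisSeq mu (j : ℕ)
          = (∑ j : Fin (s+1), (M.mulVec a') j • basisSeq mu (j : ℕ))
            - ∑ j : Fin (s+1), b j • basisSeq mu (j : ℕ) := by
        rw [← Finset.sum_sub_distrib]
        exact Finset.sum_congr rfl fun j _ => by rw [Pi.sub_apply, sub_smul]
      rw [this, hGa', hb, sub_self]
    have hMab : M.mulVec a' = b := by
      have := indep_aux mu hmu _ hz
      exact sub_eq_zero.mp this
    have haa : a' = a := by
      rw [ha, ← hMab, Matrix.mulVec_mulVec, Matrix.nonsing_inv_mul M hdet, Matrix.one_mulVec]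
    rw [← ha', haa]
end

section
/- Let p(X) be a monic polynomial and μ ≠ 0 a root of p of multiplicity exactly m. Then the kernel of p(T) restricted to L = span{μ^n, n μ^n, …, n^{m+s} μ^n} is exactly K = span{μ^n, n μ^n, …, n^{m−1} μ^n}, and L decomposes as the direct sum K ⊕ span{n^m μ^n, …, n^{m+s} μ^n}. -/
open Polynomial

namespace StmtAux

open Finset

variable (mu : ℂ)

noncomputable def F (j : ℕ) : Submodule ℂ (ℕ → ℂ) :=
  Submodule.span ℂ (basisSeq mu '' {i | i < j})

lemma F_mono {j j' : ℕ} (h : j ≤ j') : F mu j ≤ F mu j' :=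
  Submodule.span_mono (Set.image_mono fun i hi => lt_of_lt_of_le hi h)

lemma e_mem_F {i j : ℕ} (h : i < j) : basisSeq mu i ∈ F mu j :=
  Submodule.subset_span ⟨i, h, rfl⟩

lemma shift_e (k : ℕ) : shift (basisSeq mu k) =
    mu • basisSeq mu k + ∑ i ∈ range k, ((k.choose i : ℂ) * mu) • basisSeq mu i := by
  funext n
  have h : ((n : ℂ) + 1) ^ k = ∑ i ∈ range (k + 1), (n : ℂ) ^ i * (k.choose i : ℂ) := by
    rw [add_pow]
    simp
  simp only [shift, LinearMap.coe_mk, AddHom.coe_mk, basisSeq, Pi.add_apply, Pi.smul_apply,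
    Finset.sum_apply, smul_eq_mul]
  push_cast
  rw [h, Finset.sum_range_succ]
  rw [pow_succ, Nat.choose_self]
  rw [add_mul, Finset.sum_mul]
  rw [add_comm]
  congr 1
  · push_cast; ring
  · apply Finset.sum_congr rfl; intro i _; ring

lemma shift_F (j : ℕ) : F mu j ≤ (F mu j).comap shift := by
  rw [F, Submodule.span_le]
  rintro _ ⟨i, hi, rfl⟩
  have : shift (basisSeq mu i) ∈ F mu j := by
    rw [shift_e]
    exact add_mem (Submodule.smul_mem _ _ (e_mem_F mu hi))
      (Submodule.sum_mem _ fun l hl => Submodule.smul_mem _ _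
        (e_mem_F mu (lt_trans (Finset.mem_range.mp hl) hi)))
  exact this

noncomputable def Dop : Module.End ℂ (ℕ → ℂ) := shift - mu • 1

lemma D_e (k : ℕ) : Dop mu (basisSeq mu k) =
    ∑ i ∈ range k, ((k.choose i : ℂ) * mu) • basisSeq mu i := by
  simp only [Dop, LinearMap.sub_apply, LinearMap.smul_apply, Module.End.one_apply, shift_e]
  abel

lemma D_F (j : ℕ) : F mu (j + 1) ≤ (F mu j).comap (Dop mu) := by
  rw [F, Submodule.span_le]
  rintro _ ⟨i, hi, rfl⟩
  have : Dop mu (basisSeq mu i) ∈ F mu j := by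
    rw [D_e]
    exact Submodule.sum_mem _ fun l hl => Submodule.smul_mem _ _
      (e_mem_F mu (lt_of_lt_of_le (Finset.mem_range.mp hl) (Nat.lt_succ_iff.mp hi)))
  exact this

lemma D_e_succ (k : ℕ) :
    Dop mu (basisSeq mu (k + 1)) - ((((k : ℕ) : ℂ) + 1) * mu) • basisSeq mu k ∈ F mu k := by
  rw [D_e, Finset.sum_range_succ]
  have h : (((k+1).choose k : ℂ)) = ((k : ℕ) : ℂ) + 1 := by
    rw [Nat.choose_succ_self_right]; push_cast; ring
  rw [h, add_sub_cancel_right]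
  exact Submodule.sum_mem _ fun l hl => Submodule.smul_mem _ _
    (e_mem_F mu (Finset.mem_range.mp hl))

lemma Dpow_F (t : ℕ) : ∀ j : ℕ, ∀ v ∈ F mu (j + t), ((Dop mu) ^ t) v ∈ F mu j := by
  induction t with
  | zero => intro j v hv; simpa using hv
  | succ t ih =>
    intro j v hv
    rw [pow_succ, Module.End.mul_apply]
    have hv' : v ∈ F mu ((j + t) + 1) := by
      have : j + (t+1) = (j + t) + 1 := by omega
      rwa [this] at hv
    exact ih j _ (D_F mu (j + t) hv')

lemma Dpow_zero (t : ℕ) : ∀ v ∈ F mu t, ((Dop mu) ^ t) v = 0 := by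
  induction t with
  | zero =>
    intro v hv
    have h0 : F mu 0 = ⊥ := by
      have : (basisSeq mu '' {i | i < 0}) = (∅ : Set (ℕ → ℂ)) := by simp
      rw [F, this, Submodule.span_empty]
    rw [h0] at hv
    simpa using hv
  | succ t ih =>
    intro v hv
    rw [pow_succ, Module.End.mul_apply]
    exact ih _ (D_F mu t hv)

lemma Dpow_e (hmu : mu ≠ 0) (t : ℕ) : ∀ j : ℕ, ∃ c : ℂ, c ≠ 0 ∧
    ((Dop mu) ^ t) (basisSeq mu (t + j)) - c • basisSeq mu j ∈ F mu j := by
  induction t with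
  | zero => intro j; exact ⟨1, one_ne_zero, by simp⟩
  | succ t ih =>
    intro j
    obtain ⟨c, hc, hmem⟩ := ih j
    set a : ℂ := (((t + j : ℕ) : ℂ) + 1) * mu with ha
    have hane : a ≠ 0 := mul_ne_zero (Nat.cast_add_one_ne_zero (t + j)) hmu
    refine ⟨a * c, mul_ne_zero hane hc, ?_⟩
    have hidx : t + 1 + j = t + j + 1 := by omega
    rw [hidx]
    have key : ((Dop mu) ^ (t+1)) (basisSeq mu (t + j + 1)) - (a * c) • basisSeq mu j
        = a • (((Dop mu) ^ t) (basisSeq mu (t + j)) - c • basisSeq mu j)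
          + ((Dop mu) ^ t) (Dop mu (basisSeq mu (t + j + 1)) - a • basisSeq mu (t + j)) := by
      rw [pow_succ, Module.End.mul_apply, map_sub, map_smul, smul_sub, smul_smul]
      abel
    rw [key]
    refine add_mem (Submodule.smul_mem _ _ hmem) ?_
    have hw : Dop mu (basisSeq mu (t + j + 1)) - a • basisSeq mu (t + j) ∈ F mu (t + j) := by
      have := D_e_succ mu (t + j)
      rwa [ha]
    exact Dpow_F mu t j _ (by simpa [Nat.add_comm] using hw)

lemma shiftpow_F (n : ℕ) (j : ℕ) : ∀ v ∈ F mu j, (shift ^ n) v ∈ F mu j := by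
  induction n with
  | zero => intro v hv; simpa using hv
  | succ n ih =>
    intro v hv
    rw [pow_succ, Module.End.mul_apply]
    exact ih _ (shift_F mu j hv)

lemma shiftpow_e (n : ℕ) (j : ℕ) :
    (shift ^ n) (basisSeq mu j) - (mu ^ n) • basisSeq mu j ∈ F mu j := by
  induction n with
  | zero => simp
  | succ n ih =>
    have key : (shift ^ (n+1)) (basisSeq mu j) - (mu ^ (n+1)) • basisSeq mu j
        = shift ((shift ^ n) (basisSeq mu j) - (mu ^ n) • basisSeq mu j)
          + (mu ^ n) • (shift (basisSeq mu j) - mu • basisSeq mu j) := by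
      rw [pow_succ', Module.End.mul_apply, map_sub, map_smul, smul_sub, smul_smul, ← pow_succ]
      abel
    rw [key]
    refine add_mem (shift_F mu j ih) (Submodule.smul_mem _ _ ?_)
    rw [shift_e, add_sub_cancel_left]
    exact Submodule.sum_mem _ fun l hl => Submodule.smul_mem _ _
      (e_mem_F mu (Finset.mem_range.mp hl))

lemma aeval_F (r : Polynomial ℂ) (j : ℕ) : ∀ v ∈ F mu j, (aeval shift r) v ∈ F mu j := by
  intro v hv
  rw [aeval_eq_sum_range, LinearMap.sum_apply]
  exact Submodule.sum_mem _ fun i _ => by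
    rw [LinearMap.smul_apply]
    exact Submodule.smul_mem _ _ (shiftpow_F mu i j v hv)

lemma aeval_e (r : Polynomial ℂ) (j : ℕ) :
    (aeval shift r) (basisSeq mu j) - (r.eval mu) • basisSeq mu j ∈ F mu j := by
  rw [aeval_eq_sum_range, eval_eq_sum_range, LinearMap.sum_apply, Finset.sum_smul,
    ← Finset.sum_sub_distrib]
  refine Submodule.sum_mem _ fun i _ => ?_
  rw [LinearMap.smul_apply, ← smul_smul, ← smul_sub]
  exact Submodule.smul_mem _ _ (shiftpow_e mu i j)

lemma li (hmu : mu ≠ 0) : LinearIndependent ℂ (basisSeq mu) := by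
  rw [linearIndependent_iff']
  intro s g hg i hi
  have hP : (∑ j ∈ s, C (g j) * X ^ j : Polynomial ℂ) = 0 := by
    apply eq_zero_of_infinite_isRoot
    apply Set.Infinite.mono (s := Set.range (Nat.cast : ℕ → ℂ))
    · rintro _ ⟨n, rfl⟩
      have h1 := congrFun hg n
      simp only [Finset.sum_apply, Pi.smul_apply, basisSeq, smul_eq_mul, Pi.zero_apply] at h1
      have h2 : (∑ j ∈ s, g j * (n : ℂ) ^ j) * mu ^ n = 0 := by
        rw [Finset.sum_mul]
        convert h1 using 2 with j hj
        ring
      have h3 : (∑ j ∈ s, g j * (n : ℂ) ^ j) = 0 :=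
        (mul_eq_zero.mp h2).resolve_right (pow_ne_zero n hmu)
      simp only [Set.mem_setOf_eq, IsRoot, eval_finset_sum, eval_mul, eval_C, eval_pow, eval_X]
      exact h3
    · exact Set.infinite_range_of_injective Nat.cast_injective
  have := congrArg (fun P => Polynomial.coeff P i) hP
  simp only [finset_sum_coeff, coeff_C_mul, coeff_X_pow, coeff_zero, mul_ite, mul_one,
    mul_zero] at this
  rwa [Finset.sum_ite_eq s i g, if_pos hi] at this

variable {m : ℕ} {q p : Polynomial ℂ}

lemma aeval_factor (hp : p = (X - C mu) ^ m * q) :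
    aeval shift p = aeval shift q * (Dop mu) ^ m := by
  rw [hp, mul_comm, map_mul, map_pow, map_sub, aeval_X, aeval_C,
    Algebra.algebraMap_eq_smul_one]
  rfl

lemma pT_kill (hp : p = (X - C mu) ^ m * q) :
    ∀ v ∈ F mu m, (aeval shift p) v = 0 := by
  intro v hv
  rw [aeval_factor mu hp, Module.End.mul_apply, Dpow_zero mu m v hv, map_zero]

lemma pT_e (hmu : mu ≠ 0) (hp : p = (X - C mu) ^ m * q) (hq : q.eval mu ≠ 0) (j : ℕ) :
    ∃ c : ℂ, c ≠ 0 ∧ (aeval shift p) (basisSeq mu (m + j)) - c • basisSeq mu j ∈ F mu j := by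
  obtain ⟨c, hc, hmem⟩ := Dpow_e mu hmu m j
  refine ⟨c * q.eval mu, mul_ne_zero hc hq, ?_⟩
  rw [aeval_factor mu hp, Module.End.mul_apply]
  have key : (aeval shift q) (((Dop mu) ^ m) (basisSeq mu (m + j))) - (c * q.eval mu) • basisSeq mu j
      = (aeval shift q) (((Dop mu) ^ m) (basisSeq mu (m + j)) - c • basisSeq mu j)
        + c • ((aeval shift q) (basisSeq mu j) - (q.eval mu) • basisSeq mu j) := by
    rw [map_sub, map_smul, smul_sub, smul_smul, mul_comm c (q.eval mu), mul_comm]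
    abel
  rw [key]
  exact add_mem (aeval_F mu q j _ hmem) (Submodule.smul_mem _ _ (aeval_e mu q j))

lemma e_notMem_F (hmu : mu ≠ 0) (j : ℕ) : basisSeq mu j ∉ F mu j := by
  rw [F]
  exact (li mu hmu).notMem_span_image (by simp)

lemma inj_on_M (hmu : mu ≠ 0) (hp : p = (X - C mu) ^ m * q) (hq : q.eval mu ≠ 0) :
    ∀ t : ℕ, ∀ v ∈ Submodule.span ℂ (basisSeq mu '' {i | m ≤ i ∧ i < m + t}),
      (aeval shift p) v = 0 → v = 0 := by
  intro t
  induction t with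
  | zero =>
    intro v hv _
    have : (basisSeq mu '' {i | m ≤ i ∧ i < m + 0}) = ∅ := by
      simp only [Set.image_eq_empty]
      ext i; simp
    rw [this, Submodule.span_empty, Submodule.mem_bot] at hv
    exact hv
  | succ t ih =>
    intro v hv hv0
    have hset : {i | m ≤ i ∧ i < m + (t+1)} = insert (m + t) {i | m ≤ i ∧ i < m + t} := by
      ext i; simp; omega
    rw [hset, Set.image_insert_eq] at hv
    obtain ⟨b, z, hz, rfl⟩ := Submodule.mem_span_insert.mp hv
    -- p(T) z ∈ F t
    have hzF : (aeval shift p) z ∈ F mu t := by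
      have hle : Submodule.span ℂ (basisSeq mu '' {i | m ≤ i ∧ i < m + t}) ≤
          (F mu t).comap (aeval shift p) := by
        rw [Submodule.span_le]
        rintro _ ⟨i, ⟨hi1, hi2⟩, rfl⟩
        obtain ⟨c, hc, hmem⟩ := pT_e mu hmu hp hq (i - m)
        have hieq : m + (i - m) = i := by omega
        rw [hieq] at hmem
        have : (aeval shift p) (basisSeq mu i) =
            ((aeval shift p) (basisSeq mu i) - c • basisSeq mu (i - m)) + c • basisSeq mu (i - m) := by
          abel
        show (aeval shift p) (basisSeq mu i) ∈ F mu t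
        rw [this]
        exact add_mem (F_mono mu (by omega) hmem)
          (Submodule.smul_mem _ _ (e_mem_F mu (by omega)))
      exact hle hz
    obtain ⟨c, hc, hmem⟩ := pT_e mu hmu hp hq t
    have hb : b = 0 := by
      by_contra hb
      apply e_notMem_F mu hmu t
      have hsum : (b * c) • basisSeq mu t =
          -(b • ((aeval shift p) (basisSeq mu (m + t)) - c • basisSeq mu t)) - (aeval shift p) z := by
        have h0 : b • (aeval shift p) (basisSeq mu (m + t)) + (aeval shift p) z = 0 := by
          rw [map_add, map_smul] at hv0; exact hv0
        rw [smul_sub, smul_smul, neg_sub, sub_sub, h0, sub_zero]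
      have hmem2 : (b * c) • basisSeq mu t ∈ F mu t := by
        rw [hsum]
        exact sub_mem (neg_mem (Submodule.smul_mem _ _ hmem)) hzF
      have := Submodule.smul_mem (F mu t) (b * c)⁻¹ hmem2
      rwa [smul_smul, inv_mul_cancel₀ (mul_ne_zero hb hc), one_smul] at this
    rw [hb, zero_smul, zero_add] at hv0 ⊢
    exact ih z hz hv0

end StmtAux

theorem stmt_12 (mu : ℂ) (hmu : mu ≠ 0) (m : ℕ) (hm : 1 ≤ m) (q : Polynomial ℂ)
    (p : Polynomial ℂ) (hp : p = (X - C mu) ^ m * q)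
    (hmonic : p.Monic) (hq : q.eval mu ≠ 0) (s : ℕ)
    (L K M : Submodule ℂ (ℕ → ℂ))
    (hL : L = Submodule.span ℂ (Set.range fun k : Fin (m + s + 1) => basisSeq mu k))
    (hK : K = Submodule.span ℂ (Set.range fun k : Fin m => basisSeq mu k))
    (hM : M = Submodule.span ℂ (Set.range fun k : Fin (s + 1) => basisSeq mu (m + k))) :
    (∀ y ∈ L, ((Polynomial.aeval shift p) y = 0 ↔ y ∈ K)) ∧
    K ⊔ M = L ∧ K ⊓ M = ⊥ := by
  open StmtAux in
  have hrange : ∀ N : ℕ, (Set.range fun k : Fin N => basisSeq mu k) = basisSeq mu '' {i | i < N} := by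
    intro N
    ext x
    constructor
    · rintro ⟨k, rfl⟩; exact ⟨k, k.isLt, rfl⟩
    · rintro ⟨i, hi, rfl⟩; exact ⟨⟨i, hi⟩, rfl⟩
  have hrangeM : (Set.range fun k : Fin (s+1) => basisSeq mu (m + k))
      = basisSeq mu '' {i | m ≤ i ∧ i < m + (s + 1)} := by
    ext x
    constructor
    · rintro ⟨k, rfl⟩; exact ⟨m + k, ⟨Nat.le_add_right _ _, by omega⟩, rfl⟩
    · rintro ⟨i, ⟨h1, h2⟩, rfl⟩
      refine ⟨⟨i - m, by omega⟩, ?_⟩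
      show basisSeq mu (m + (i - m)) = basisSeq mu i
      rw [Nat.add_sub_cancel' h1]
  have hKF : K = F mu m := by rw [hK, hrange]; rfl
  have hLF : L = F mu (m + s + 1) := by rw [hL, hrange]; rfl
  have hM' : M = Submodule.span ℂ (basisSeq mu '' {i | m ≤ i ∧ i < m + (s + 1)}) := by
    rw [hM, hrangeM]
  have hsup : K ⊔ M = L := by
    have hsets : {i : ℕ | i < m} ∪ {i : ℕ | m ≤ i ∧ i < m + (s + 1)} = {i : ℕ | i < m + s + 1} := by
      ext i; simp; omega
    rw [hKF, hM', hLF, F, F, ← Submodule.span_union, ← Set.image_union, hsets]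
  refine ⟨?_, hsup, ?_⟩
  · intro y hy
    constructor
    · intro hy0
      rw [← hsup] at hy
      obtain ⟨u, hu, v, hv, rfl⟩ := Submodule.mem_sup.mp hy
      have hpu : (aeval shift p) u = 0 := pT_kill mu hp u (hKF ▸ hu)
      have hpv : (aeval shift p) v = 0 := by
        rw [map_add, hpu, zero_add] at hy0; exact hy0
      have hv0 : v = 0 := inj_on_M mu hmu hp hq (s + 1) v (hM' ▸ hv) hpv
      rw [hv0, add_zero]
      exact hu
    · intro hyK
      exact pT_kill mu hp y (hKF ▸ hyK)
  · rw [hKF, hM', F, disjoint_iff.mp ((li mu hmu).disjoint_span_image ?_)]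
    rw [Set.disjoint_left]
    intro i hi1 hi2
    simp only [Set.mem_setOf_eq] at hi1 hi2
    omega
end
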